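/- Let G be a connected finite simple graph that has an efficient dominating set S, and let H be a finite simple graph with an independent [1,2]-set of cardinality at most 2. Then the lexicographic product G∘H has an independent [1,2]-set and γ_{i[1,2]}(G∘H) = |S| · γ_{i[1,2]}(H). -/

import Mathlib

open SimpleGraph

/-- The lexicographic product of two simple graphs. -/
def SimpleGraph.lexProd {V W : Type*} (G : SimpleGraph V) (H : SimpleGraph W) :
    SimpleGraph (V × W) where
  Adj p q := G.Adj p.1 q.1 ∨ (p.1 = q.1 ∧ H.Adj p.2 q.2)
  symm := by
    constructor
    rintro p q (h | ⟨e, h⟩)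
    · exact Or.inl h.symm
    · exact Or.inr ⟨e.symm, h.symm⟩
  loopless := by
    constructor
    rintro p (h | ⟨_, h⟩)
    · exact G.ne_of_adj h rfl
    · exact H.ne_of_adj h rfl

/-- The `H`-layer of the product over a vertex `v` of `G`: all pairs with first
coordinate `v`. -/
def layer {V W : Type*} (v : V) : Set (V × W) := {p | p.1 = v}

/-- `S` is a `[1,k]`-set of `G`: every vertex outside `S` has at least `1` and at
most `k` neighbors in `S`. -/
def IsOneK {V : Type*} (G : SimpleGraph V) (k : ℕ) (S : Set V) : Prop :=
  ∀ v ∉ S, 1 ≤ (G.neighborSet v ∩ S).ncard ∧ (G.neighborSet v ∩ S).ncard ≤ k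

/-- `S` is a total `[1,k]`-set of `G`: every vertex has at least `1` and at most `k`
neighbors in `S`. -/
def IsTotalOneK {V : Type*} (G : SimpleGraph V) (k : ℕ) (S : Set V) : Prop :=
  ∀ v, 1 ≤ (G.neighborSet v ∩ S).ncard ∧ (G.neighborSet v ∩ S).ncard ≤ k

/-- `S` is an independent `[1,k]`-set of `G`. -/
def IsIndepOneK {V : Type*} (G : SimpleGraph V) (k : ℕ) (S : Set V) : Prop :=
  IsOneK G k S ∧ ∀ v ∈ S, ∀ w ∈ S, ¬ G.Adj v w

/-- `S` is `j`-dependent: every vertex of `S` has at most `j` neighbors in `S`. -/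
def IsJDep {V : Type*} (G : SimpleGraph V) (j : ℕ) (S : Set V) : Prop :=
  ∀ v ∈ S, (G.neighborSet v ∩ S).ncard ≤ j

/-- `S` is an efficient dominating set of `G`. -/
def IsEffDom {V : Type*} (G : SimpleGraph V) (S : Set V) : Prop :=
  (∀ v ∉ S, (G.neighborSet v ∩ S).ncard = 1) ∧ ∀ v ∈ S, (G.neighborSet v ∩ S).ncard = 0

/-- Membership in `SD^j_{[1,k]}(G)`: a `j`-dependent `[1,k]`-set such that every
vertex of `S` with no neighbor in `S` is at distance at least `3` from every other
vertex of `S`. -/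
def InSD {V : Type*} (G : SimpleGraph V) (k j : ℕ) (S : Set V) : Prop :=
  IsOneK G k S ∧ IsJDep G j S ∧
    ∀ v ∈ S, (G.neighborSet v ∩ S).ncard = 0 → ∀ v' ∈ S, v' ≠ v → 3 ≤ G.dist v v'

/-- The `[1,k]`-domination number `γ_{[1,k]}`. -/
noncomputable def gammaOneK {V : Type*} (G : SimpleGraph V) (k : ℕ) : ℕ :=
  sInf {n | ∃ S : Set V, IsOneK G k S ∧ S.ncard = n}

/-- The total `[1,k]`-domination number `γ_{t[1,k]}`. -/
noncomputable def gammaTotalOneK {V : Type*} (G : SimpleGraph V) (k : ℕ) : ℕ :=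
  sInf {n | ∃ S : Set V, IsTotalOneK G k S ∧ S.ncard = n}

/-- The `[1,k]`-independence number `γ_{i[1,k]}`. -/
noncomputable def gammaIndepOneK {V : Type*} (G : SimpleGraph V) (k : ℕ) : ℕ :=
  sInf {n | ∃ S : Set V, IsIndepOneK G k S ∧ S.ncard = n}

/-- `D` is a dominating set of `G`. -/
def IsDomSet {V : Type*} (G : SimpleGraph V) (D : Set V) : Prop :=
  ∀ v ∉ D, ∃ u ∈ D, G.Adj v u

/-- `D` is a total dominating set of `G`. -/
def IsTotalDomSet {V : Type*} (G : SimpleGraph V) (D : Set V) : Prop :=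
  ∀ v, ∃ u ∈ D, G.Adj v u

/-- The domination number `γ`. -/
noncomputable def gammaDom {V : Type*} (G : SimpleGraph V) : ℕ :=
  sInf {n | ∃ D : Set V, IsDomSet G D ∧ D.ncard = n}

/-- The total domination number `γ_t`. -/
noncomputable def gammaTotalDom {V : Type*} (G : SimpleGraph V) : ℕ :=
  sInf {n | ∃ D : Set V, IsTotalDomSet G D ∧ D.ncard = n}

lemma prod_ncard {α β : Type*} (s : Set α) (t : Set β) :
    (s ×ˢ t).ncard = s.ncard * t.ncard := by
  rw [← Nat.card_coe_set_eq, ← Nat.card_coe_set_eq, ← Nat.card_coe_set_eq,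
    Nat.card_congr (Equiv.Set.prod s t), Nat.card_prod]

lemma mk_snd_injective {α β : Type*} (v : α) : Function.Injective (fun k : β => (v, k)) :=
  fun _ _ hab => congrArg Prod.snd hab

/-- If `D` is an independent `[1,2]`-set of `G∘H` and the layer of `v` meets `D`,
then the slice of `D` over `v` is an independent `[1,2]`-set of `H`. -/
lemma layer_isIndep {V W : Type*} [Fintype V] [Fintype W] (G : SimpleGraph V)
    (H : SimpleGraph W) {D : Set (V × W)} (hD : IsIndepOneK (G.lexProd H) 2 D)
    (v : V) (hne : {h | (v, h) ∈ D}.Nonempty) : IsIndepOneK H 2 {h | (v, h) ∈ D} := by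
  obtain ⟨h0, hh0⟩ := hne
  constructor
  · intro h hh
    have hvh : (v, h) ∉ D := hh
    have key : (G.lexProd H).neighborSet (v, h) ∩ D
        = (fun k => (v, k)) '' (H.neighborSet h ∩ {h | (v, h) ∈ D}) := by
      ext ⟨u, k⟩
      constructor
      · rintro ⟨hadj, hmem⟩
        rcases hadj with hG | ⟨hu, hHa⟩
        · exact (hD.2 (v, h0) hh0 (u, k) hmem (Or.inl hG)).elim
        · have hu' : v = u := hu
          subst hu'
          exact ⟨k, ⟨hHa, hmem⟩, rfl⟩
      · rintro ⟨k', ⟨hk1, hk2⟩, heq⟩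
        have e1 : v = u := congrArg Prod.fst heq
        have e2 : k' = k := congrArg Prod.snd heq
        subst e1; subst e2
        exact ⟨Or.inr ⟨rfl, hk1⟩, hk2⟩
    have hcard := hD.1 (v, h) hvh
    rwa [key, Set.ncard_image_of_injective _ (mk_snd_injective v)] at hcard
  · intro h hh h' hh' hadj
    exact hD.2 (v, h) hh (v, h') hh' (Or.inr ⟨rfl, hadj⟩)


/-- Let `G` be connected with an efficient dominating set `S`, and let
`H` have an independent `[1,2]`-set of cardinality at most `2`. Then `G∘H` has an
independent `[1,2]`-set and `γ_{i[1,2]}(G∘H) = |S| ⬝ γ_{i[1,2]}(H)`. -/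
theorem stmt18 {V W : Type*} [Fintype V] [Fintype W] (G : SimpleGraph V)
    (H : SimpleGraph W) (hconn : G.Connected)
    (S : Set V) (hS : IsEffDom G S)
    (hH : ∃ T : Set W, IsIndepOneK H 2 T ∧ T.ncard ≤ 2) :
    (∃ D : Set (V × W), IsIndepOneK (G.lexProd H) 2 D) ∧
      gammaIndepOneK (G.lexProd H) 2 = S.ncard * gammaIndepOneK H 2 := by
  classical
  have hSindep : ∀ v ∈ S, G.neighborSet v ∩ S = ∅ := fun v hv =>
    (Set.ncard_eq_zero (Set.toFinite _)).mp (hS.2 v hv)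
  rcases isEmpty_or_nonempty W with hW | hW
  · have hprod : IsIndepOneK (G.lexProd H) 2 (∅ : Set (V × W)) :=
      ⟨fun p _ => (IsEmpty.false p.2).elim, fun p _ => (IsEmpty.false p.2).elim⟩
    have h1 : gammaIndepOneK (G.lexProd H) 2 = 0 :=
      Nat.le_zero.mp (Nat.sInf_le ⟨∅, hprod, Set.ncard_empty _⟩)
    have h2 : gammaIndepOneK H 2 = 0 :=
      Nat.le_zero.mp (Nat.sInf_le ⟨∅, ⟨fun w _ => (IsEmpty.false w).elim,
        fun w _ => (IsEmpty.false w).elim⟩, Set.ncard_empty _⟩)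
    exact ⟨⟨∅, hprod⟩, by rw [h1, h2, mul_zero]⟩
  set t := gammaIndepOneK H 2 with ht
  obtain ⟨Texist, hTexist, hTexist2⟩ := hH
  have hne : {n | ∃ T : Set W, IsIndepOneK H 2 T ∧ T.ncard = n}.Nonempty :=
    ⟨_, Texist, hTexist, rfl⟩
  obtain ⟨T0, hT0, hT0c'⟩ := Nat.sInf_mem hne
  have hT0c : T0.ncard = t := hT0c'
  have htmin : ∀ T : Set W, IsIndepOneK H 2 T → t ≤ T.ncard :=
    fun T hT => Nat.sInf_le ⟨T, hT, rfl⟩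
  have ht2 : t ≤ 2 := le_trans (htmin _ hTexist) hTexist2
  have hT0ne : T0.Nonempty := by
    by_contra hc
    rw [Set.not_nonempty_iff_eq_empty] at hc
    obtain ⟨w⟩ := hW
    have := (hT0.1 w (by simp [hc])).1
    simp [hc] at this
  have ht1 : 1 ≤ t := by
    have h' := (Set.ncard_pos (Set.toFinite _)).mpr hT0ne
    rw [hT0c] at h'
    omega
  -- the canonical independent [1,2]-set of the product
  have hD0 : IsIndepOneK (G.lexProd H) 2 (S ×ˢ T0) := by
    constructor
    · rintro ⟨v, h⟩ hp
      by_cases hv : v ∈ S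
      · have hhT0 : h ∉ T0 := fun hh => hp ⟨hv, hh⟩
        have key : (G.lexProd H).neighborSet (v, h) ∩ (S ×ˢ T0)
            = (fun k => (v, k)) '' (H.neighborSet h ∩ T0) := by
          ext ⟨u, k⟩
          constructor
          · rintro ⟨hadj, huS, hkT⟩
            rcases hadj with hG | ⟨hu, hHa⟩
            · have : u ∈ G.neighborSet v ∩ S := ⟨hG, huS⟩
              rw [hSindep v hv] at this
              exact this.elim
            · have hu' : v = u := hu
              subst hu'
              exact ⟨k, ⟨hHa, hkT⟩, rfl⟩
          · rintro ⟨k', ⟨hk1, hk2⟩, heq⟩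
            have e1 : v = u := congrArg Prod.fst heq
            have e2 : k' = k := congrArg Prod.snd heq
            subst e1; subst e2
            exact ⟨Or.inr ⟨rfl, hk1⟩, hv, hk2⟩
        rw [key, Set.ncard_image_of_injective _ (mk_snd_injective v)]
        exact hT0.1 h hhT0
      · obtain ⟨u, hu⟩ := Set.ncard_eq_one.mp (hS.1 v hv)
        have huN : u ∈ G.neighborSet v ∩ S := by rw [hu]; rfl
        have key : (G.lexProd H).neighborSet (v, h) ∩ (S ×ˢ T0)
            = (fun k => (u, k)) '' T0 := by
          ext ⟨w, k⟩
          constructor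
          · rintro ⟨hadj, hwS, hkT⟩
            rcases hadj with hG | ⟨hw, _⟩
            · have hwu : w ∈ G.neighborSet v ∩ S := ⟨hG, hwS⟩
              rw [hu] at hwu
              have hwu' : w = u := hwu
              subst hwu'
              exact ⟨k, hkT, rfl⟩
            · have hw' : v = w := hw
              exact absurd (hw' ▸ hwS) hv
          · rintro ⟨k', hk', heq⟩
            have e1 : u = w := congrArg Prod.fst heq
            have e2 : k' = k := congrArg Prod.snd heq
            subst e1; subst e2
            exact ⟨Or.inl huN.1, huN.2, hk'⟩
        rw [key, Set.ncard_image_of_injective _ (mk_snd_injective u), hT0c]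
        exact ⟨ht1, ht2⟩
    · rintro ⟨v, h⟩ ⟨hv, hh⟩ ⟨v', h'⟩ ⟨hv', hh'⟩ hadj
      rcases hadj with hG | ⟨heq, hHa⟩
      · have : v' ∈ G.neighborSet v ∩ S := ⟨hG, hv'⟩
        rw [hSindep v hv] at this
        exact this.elim
      · exact hT0.2 h hh h' hh' hHa
  have hD0card : (S ×ˢ T0).ncard = S.ncard * t := by rw [prod_ncard, hT0c]
  have hub : gammaIndepOneK (G.lexProd H) 2 ≤ S.ncard * t :=
    Nat.sInf_le ⟨S ×ˢ T0, hD0, hD0card⟩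
  refine ⟨⟨S ×ˢ T0, hD0⟩, le_antisymm hub ?_⟩
  -- lower bound
  obtain ⟨Dm, hDm, hDmc⟩ :=
    Nat.sInf_mem (⟨_, S ×ˢ T0, hD0, rfl⟩ :
      {n | ∃ D : Set (V × W), IsIndepOneK (G.lexProd H) 2 D ∧ D.ncard = n}.Nonempty)
  rw [gammaIndepOneK, ← hDmc]
  -- the projection to the efficient dominating set
  have hSu : ∀ v, v ∉ S → ∃ u, G.neighborSet v ∩ S = {u} :=
    fun v hv => Set.ncard_eq_one.mp (hS.1 v hv)
  set f : V → V := fun v => if hv : v ∈ S then v else (hSu v hv).choose with hf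
  have hfS : ∀ v ∈ S, f v = v := fun v hv => dif_pos hv
  have hf2 : ∀ v, v ∉ S → G.neighborSet v ∩ S = {f v} := by
    intro v hv
    rw [hf]
    simp only [dif_neg hv]
    exact (hSu v hv).choose_spec
  have hf1 : ∀ v, f v ∈ S := by
    intro v
    by_cases hv : v ∈ S
    · rw [hfS v hv]; exact hv
    · have : f v ∈ G.neighborSet v ∩ S := by rw [hf2 v hv]; rfl
      exact this.2
  have hDF := Set.toFinite Dm
  have hSF := Set.toFinite S
  have hmap : ∀ p ∈ hDF.toFinset, f p.1 ∈ hSF.toFinset :=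
    fun p _ => (Set.Finite.mem_toFinset _).mpr (hf1 p.1)
  have hsum := Finset.card_eq_sum_card_fiberwise hmap
  have hfilter_eq : ∀ s (p : V × W),
      p ∈ hDF.toFinset.filter (fun p => f p.1 = s) ↔ p ∈ Dm ∧ f p.1 = s := by
    intro s p
    simp [Set.Finite.mem_toFinset]
  have hfib : ∀ s ∈ hSF.toFinset,
      t ≤ (hDF.toFinset.filter fun p => f p.1 = s).card := by
    intro s hsSF
    have hsS : s ∈ S := (Set.Finite.mem_toFinset _).mp hsSF
    by_cases hcase : {h | (s, h) ∈ Dm}.Nonempty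
    · have hind := layer_isIndep G H hDm s hcase
      have h1 : t ≤ {h | (s, h) ∈ Dm}.ncard := htmin _ hind
      have hsub : (fun h => (s, h)) '' {h | (s, h) ∈ Dm}
          ⊆ ↑(hDF.toFinset.filter fun p => f p.1 = s) := by
        rintro p ⟨h', hh', rfl⟩
        exact Finset.mem_coe.mpr ((hfilter_eq s _).mpr ⟨hh', hfS s hsS⟩)
      have h2 := Set.ncard_le_ncard hsub (Set.toFinite _)
      rw [Set.ncard_image_of_injective _ (mk_snd_injective s), Set.ncard_coe_finset] at h2
      omega
    · by_contra hlt
      push_neg at hlt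
      have hDs : ∀ h, (s, h) ∉ Dm := fun h hh => hcase ⟨h, hh⟩
      obtain ⟨h0⟩ := hW
      have hdom := (hDm.1 (s, h0) (hDs h0)).1
      have hnedom : ((G.lexProd H).neighborSet (s, h0) ∩ Dm).Nonempty :=
        (Set.ncard_pos (Set.toFinite _)).mp (by omega)
      obtain ⟨⟨u, k⟩, hadj, hmem⟩ := hnedom
      rcases hadj with hG | ⟨heq, _⟩
      · have huS : u ∉ S := by
          intro hu
          have : u ∈ G.neighborSet s ∩ S := ⟨hG, hu⟩
          rw [hSindep s hsS] at this
          exact this.elim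
        have hfu : f u = s := by
          have : s ∈ G.neighborSet u ∩ S := ⟨hG.symm, hsS⟩
          rw [hf2 u huS] at this
          exact this.symm
        have hmemfib : (u, k) ∈ hDF.toFinset.filter (fun p => f p.1 = s) :=
          (hfilter_eq s _).mpr ⟨hmem, hfu⟩
        have hc1 : 1 ≤ (hDF.toFinset.filter fun p => f p.1 = s).card :=
          Finset.card_pos.mpr ⟨(u, k), hmemfib⟩
        have hcard1 : (hDF.toFinset.filter fun p => f p.1 = s).card = 1 := by omega
        have ht2' : t = 2 := by omega
        obtain ⟨p0, hp0⟩ := Finset.card_eq_one.mp hcard1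
        have hp0uk : p0 = (u, k) := by
          have h' := hmemfib
          rw [hp0, Finset.mem_singleton] at h'
          exact h'.symm
        have hDu : {h | (u, h) ∈ Dm} = {k} := by
          ext k'
          constructor
          · intro hk'
            have h' : (u, k') ∈ hDF.toFinset.filter (fun p => f p.1 = s) :=
              (hfilter_eq s _).mpr ⟨hk', hfu⟩
            rw [hp0, Finset.mem_singleton, hp0uk] at h'
            exact congrArg Prod.snd h'
          · intro hk'
            rw [Set.mem_singleton_iff] at hk'
            subst hk'
            exact hmem
        have hind := layer_isIndep G H hDm u (by rw [hDu]; exact ⟨k, rfl⟩)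
        rw [hDu] at hind
        have := htmin _ hind
        rw [Set.ncard_singleton] at this
        omega
      · cases heq
        exact hcase ⟨k, hmem⟩
  calc S.ncard * t = hSF.toFinset.card * t := by rw [Set.ncard_eq_toFinset_card S hSF]
    _ = hSF.toFinset.card • t := (smul_eq_mul ..).symm
    _ ≤ ∑ s ∈ hSF.toFinset, (hDF.toFinset.filter fun p => f p.1 = s).card :=
        Finset.card_nsmul_le_sum _ _ _ hfib
    _ = hDF.toFinset.card := hsum.symm
    _ = Dm.ncard := (Set.ncard_eq_toFinset_card Dm hDF).symm
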